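/- With notation as above (P ∤ 2O, ω generating ∂^{-1}P^{-1} locally at P), the Gauss sum g = Σ_{x ∈ O/P} e{2x²ω} satisfies g² = (−1/P)·N(P), where N(P) = |O/P|. -/

import Mathlib

set_option synthInstance.maxHeartbeats 1000000
set_option maxHeartbeats 1000000

open NumberField
open scoped nonZeroDivisors

open scoped Classical in
/-- The square of the quadratic Gauss sum `g = Σ_{x ∈ O/P} e{2x²ω}` at a prime `P ∤ 2`
equals `(−1/P)·N(P)`, where `e{α} = exp(πi Tr_{K/ℚ}(α))` and `ω` generates `∂⁻¹P⁻¹`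
locally at `P`. -/
theorem gauss_sum_square
    (K : Type*) [Field K] [NumberField K]
    (htr : ∀ v : InfinitePlace K, v.IsReal)
    (P : Ideal (RingOfIntegers K)) [P.IsMaximal] (hP0 : P ≠ ⊥)
    (hP2 : ¬ P ∣ Ideal.span {(2 : RingOfIntegers K)})
    [Fintype (RingOfIntegers K ⧸ P)]
    (ω : K)
    (hω : ∃ J : Ideal (RingOfIntegers K), ¬ J ≤ P ∧
      (FractionalIdeal.spanSingleton (nonZeroDivisors (RingOfIntegers K)) ω) *
        ((differentIdeal ℤ (RingOfIntegers K) * P : Ideal (RingOfIntegers K)) :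
          FractionalIdeal (nonZeroDivisors (RingOfIntegers K)) K)
      = (J : FractionalIdeal (nonZeroDivisors (RingOfIntegers K)) K))
    (s : (RingOfIntegers K ⧸ P) → RingOfIntegers K)
    (hs : ∀ x, Ideal.Quotient.mk P (s x) = x)
    (e : K → ℂ)
    (he : ∀ α : K, e α = Complex.exp (Real.pi * Complex.I * ((Algebra.trace ℚ K α : ℚ) : ℂ))) :
    (∑ x : RingOfIntegers K ⧸ P, e (2 * ((s x : K)) ^ 2 * ω)) ^ 2
      = (if IsSquare (Ideal.Quotient.mk P (-1 : RingOfIntegers K)) then (1 : ℂ) else -1) *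
        (Fintype.card (RingOfIntegers K ⧸ P) : ℂ) := by
  classical
  obtain ⟨J, hJP, hJ⟩ := hω
  set R := RingOfIntegers K with hRdef
  letI : Field (R ⧸ P) := Ideal.Quotient.field P
  -- basic properties of `e`
  have he_mul : ∀ a b : K, e (a + b) = e a * e b := by
    intro a b
    rw [he, he, he, ← Complex.exp_add, map_add]
    push_cast
    ring_nf
  have he_two : ∀ (a : K) (n : ℤ), (Algebra.trace ℚ K a) = 2 * n → e a = 1 := by
    intro a n hn
    rw [he, hn]
    push_cast
    rw [show (Real.pi : ℂ) * Complex.I * (2 * (n : ℂ)) = n * (2 * Real.pi * Complex.I) by ring]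
    exact Complex.exp_int_mul_two_pi_mul_I n
  -- the inverse different is the trace dual of `1`
  have hdual : (↑(differentIdeal ℤ R) : FractionalIdeal R⁰ K)⁻¹ = FractionalIdeal.dual ℤ ℚ 1 := by
    rw [coeIdeal_differentIdeal ℤ ℚ K R, inv_inv]
  have hdualne : FractionalIdeal.dual ℤ ℚ (1 : FractionalIdeal R⁰ K) ≠ 0 :=
    FractionalIdeal.dual_ne_zero ℤ ℚ (one_ne_zero (α := FractionalIdeal R⁰ K))
  have hdne : (↑(differentIdeal ℤ R) : FractionalIdeal R⁰ K) ≠ 0 := by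
    intro h
    rw [h, inv_zero] at hdual
    exact hdualne hdual.symm
  rw [FractionalIdeal.coeIdeal_mul] at hJ
  -- trace integrality: for `p ∈ P`, `Tr(pω) ∈ ℤ`
  have hle : FractionalIdeal.spanSingleton R⁰ ω * (P : FractionalIdeal R⁰ K)
      ≤ FractionalIdeal.dual ℤ ℚ 1 := by
    rw [← hdual]
    have h1 : (FractionalIdeal.spanSingleton R⁰ ω * (P : FractionalIdeal R⁰ K)) *
        (↑(differentIdeal ℤ R) : FractionalIdeal R⁰ K) ≤ 1 := by
      rw [show (FractionalIdeal.spanSingleton R⁰ ω * (P : FractionalIdeal R⁰ K)) *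
          (↑(differentIdeal ℤ R) : FractionalIdeal R⁰ K)
          = FractionalIdeal.spanSingleton R⁰ ω *
            ((differentIdeal ℤ R : FractionalIdeal R⁰ K) * (P : FractionalIdeal R⁰ K)) by ring,
        hJ]
      exact FractionalIdeal.coeIdeal_le_one
    calc FractionalIdeal.spanSingleton R⁰ ω * (P : FractionalIdeal R⁰ K)
        = (FractionalIdeal.spanSingleton R⁰ ω * (P : FractionalIdeal R⁰ K) *
            (↑(differentIdeal ℤ R) : FractionalIdeal R⁰ K)) *
            (↑(differentIdeal ℤ R) : FractionalIdeal R⁰ K)⁻¹ := by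
          rw [mul_assoc, mul_inv_cancel₀ hdne, mul_one]
      _ ≤ 1 * (↑(differentIdeal ℤ R) : FractionalIdeal R⁰ K)⁻¹ :=
          mul_le_mul_left h1 _
      _ = _ := one_mul _
  have htrP : ∀ p : R, p ∈ P → ∃ n : ℤ, (n : ℚ) = Algebra.trace ℚ K (((p : K)) * ω) := by
    intro p hp
    have hmem : (p : K) * ω ∈
        FractionalIdeal.spanSingleton R⁰ ω * (P : FractionalIdeal R⁰ K) := by
      rw [mul_comm (FractionalIdeal.spanSingleton R⁰ ω)]
      exact FractionalIdeal.mul_mem_mul ((FractionalIdeal.mem_coeIdeal _).mpr ⟨p, hp, rfl⟩)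
        (FractionalIdeal.mem_spanSingleton_self _ _)
    have hx : (p : K) * ω ∈ FractionalIdeal.dual ℤ ℚ (1 : FractionalIdeal R⁰ K) := hle hmem
    rw [FractionalIdeal.mem_dual (one_ne_zero (α := FractionalIdeal R⁰ K))] at hx
    have := hx 1 (FractionalIdeal.one_mem_one _)
    simpa [Algebra.traceForm_apply, RingHom.mem_range, eq_comm] using this
  -- nontriviality: some `a ∈ O` has `Tr(aω) ∉ ℤ`
  have hnt : ∃ a : R, ∀ n : ℤ, (n : ℚ) ≠ Algebra.trace ℚ K (((a : K)) * ω) := by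
    by_contra hcon
    push_neg at hcon
    have hωdual : ω ∈ FractionalIdeal.dual ℤ ℚ (1 : FractionalIdeal R⁰ K) := by
      rw [FractionalIdeal.mem_dual (one_ne_zero (α := FractionalIdeal R⁰ K))]
      intro b hb
      obtain ⟨a, rfl⟩ := (FractionalIdeal.mem_one_iff _).mp hb
      obtain ⟨n, hn⟩ := hcon a
      refine ⟨n, ?_⟩
      rw [Algebra.traceForm_apply, mul_comm ω]
      rw [algebraMap_int_eq]
      exact_mod_cast hn
    have hsp : FractionalIdeal.spanSingleton R⁰ ω ≤ FractionalIdeal.dual ℤ ℚ 1 :=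
      FractionalIdeal.spanSingleton_le_iff_mem.mpr hωdual
    have : (J : FractionalIdeal R⁰ K) ≤ (P : FractionalIdeal R⁰ K) := by
      rw [← hJ]
      calc FractionalIdeal.spanSingleton R⁰ ω *
            ((differentIdeal ℤ R : FractionalIdeal R⁰ K) * (P : FractionalIdeal R⁰ K))
          ≤ FractionalIdeal.dual ℤ ℚ 1 *
            ((differentIdeal ℤ R : FractionalIdeal R⁰ K) * (P : FractionalIdeal R⁰ K)) :=
            mul_le_mul_left hsp _
        _ = (FractionalIdeal.dual ℤ ℚ 1 * (differentIdeal ℤ R : FractionalIdeal R⁰ K)) *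
            (P : FractionalIdeal R⁰ K) := by ring
        _ = 1 * (P : FractionalIdeal R⁰ K) := by
            rw [← hdual, inv_mul_cancel₀ hdne]
        _ = (P : FractionalIdeal R⁰ K) := one_mul _
    exact hJP ((FractionalIdeal.coeIdeal_le_coeIdeal K).mp this)
  -- congruence: `e (2aω)` only depends on `a mod P`
  have he_congr : ∀ a b : R, Ideal.Quotient.mk P a = Ideal.Quotient.mk P b →
      e (2 * (a : K) * ω) = e (2 * (b : K) * ω) := by
    intro a b hab
    have hp : a - b ∈ P := (Ideal.Quotient.eq).mp hab
    obtain ⟨n, hn⟩ := htrP (a - b) hp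
    have h1 : e (2 * (((a - b : R) : K)) * ω) = 1 := by
      refine he_two _ n ?_
      have hsm : (2 : K) * (((a - b : R) : K)) * ω = (2 : ℚ) • ((((a - b : R) : K)) * ω) := by
        rw [Rat.smul_def]; push_cast; ring
      rw [hsm, map_smul, ← hn, smul_eq_mul]
    have hsplit : 2 * (a : K) * ω = 2 * (b : K) * ω + 2 * (((a - b : R) : K)) * ω := by
      push_cast; ring
    rw [hsplit, he_mul, h1, mul_one]
  -- the additive character `ψ`
  set ψ : AddChar (R ⧸ P) ℂ :=
    { toFun := fun x => e (2 * ((s x : K)) * ω)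
      map_zero_eq_one' := by
        have h0 : e (2 * (((0 : R) : K)) * ω) = 1 := by
          have : (2 : K) * (((0 : R) : K)) * ω = 0 := by push_cast; ring
          rw [this, he]
          simp
        calc e (2 * ((s 0 : K)) * ω) = e (2 * (((0 : R) : K)) * ω) :=
              he_congr _ _ (by rw [hs]; simp)
          _ = 1 := h0
      map_add_eq_mul' := by
        intro x y
        calc e (2 * ((s (x + y) : K)) * ω)
            = e (2 * (((s x + s y : R) : K)) * ω) :=
              he_congr _ _ (by rw [hs, map_add, hs, hs])
          _ = e (2 * ((s x : K)) * ω + 2 * ((s y : K)) * ω) := by push_cast; ring_nf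
          _ = _ := he_mul _ _ } with hψdef
  have hψapp : ∀ x, ψ x = e (2 * ((s x : K)) * ω) := fun _ => rfl
  -- ψ is nontrivial
  have hψne : ψ ≠ 1 := by
    obtain ⟨a, ha⟩ := hnt
    rw [AddChar.ne_one_iff]
    refine ⟨Ideal.Quotient.mk P a, ?_⟩
    rw [hψapp]
    have : e (2 * ((s (Ideal.Quotient.mk P a) : K)) * ω) = e (2 * (a : K) * ω) :=
      he_congr _ _ (by rw [hs])
    rw [this, he]
    intro hone
    obtain ⟨n, hn⟩ := Complex.exp_eq_one_iff.mp hone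
    have hπ : (Real.pi : ℂ) * Complex.I ≠ 0 :=
      mul_ne_zero (Complex.ofReal_ne_zero.mpr Real.pi_ne_zero) Complex.I_ne_zero
    have hq : ((Algebra.trace ℚ K (2 * (a : K) * ω) : ℚ) : ℂ) = 2 * (n : ℂ) := by
      apply mul_left_cancel₀ hπ
      rw [hn]; ring
    have hq' : (Algebra.trace ℚ K (2 * (a : K) * ω) : ℚ) = 2 * (n : ℚ) := by
      exact_mod_cast hq
    have htr2 : Algebra.trace ℚ K (2 * (a : K) * ω) = 2 * Algebra.trace ℚ K ((a : K) * ω) := by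
      have hsm : (2 : K) * (a : K) * ω = (2 : ℚ) • ((a : K) * ω) := by
        rw [Rat.smul_def]; push_cast; ring
      rw [hsm, map_smul, smul_eq_mul]
    rw [htr2] at hq'
    exact ha n (mul_left_cancel₀ (two_ne_zero) hq').symm
  -- each Gauss-sum term is `ψ (x²)`
  have hterm : ∀ x : R ⧸ P, e (2 * ((s x : K)) ^ 2 * ω) = ψ (x ^ 2) := by
    intro x
    rw [hψapp]
    have h1 : 2 * ((s x : K)) ^ 2 * ω = 2 * ((((s x) ^ 2 : R) : K)) * ω := by
      push_cast; ring
    rw [h1]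
    exact he_congr _ _ (by rw [map_pow, hs, hs])
  -- the sum equals the Gauss sum of the quadratic character
  have hchar2 : ringChar (R ⧸ P) ≠ 2 := by
    have h2P : (2 : R) ∉ P := by
      intro h2
      exact hP2 ((Ideal.dvd_iff_le).mpr (by
        rw [Ideal.span_le, Set.singleton_subset_iff]; exact h2))
    have h2F : (2 : R ⧸ P) ≠ 0 := by
      intro h
      apply h2P
      rw [← Ideal.Quotient.eq_zero_iff_mem, map_ofNat]
      exact h
    intro hrc
    apply h2F
    have := ringChar.Nat.cast_ringChar (R := R ⧸ P)
    rw [hrc] at this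
    exact_mod_cast this
  set χ : MulChar (R ⧸ P) ℂ := (quadraticChar (R ⧸ P)).ringHomComp (Int.castRingHom ℂ) with hχdef
  have hsum : (∑ x : R ⧸ P, e (2 * ((s x : K)) ^ 2 * ω)) = gaussSum χ ψ := by
    rw [Finset.sum_congr rfl fun x _ => hterm x]
    rw [← Finset.sum_fiberwise' Finset.univ (fun x : R ⧸ P => x ^ 2) (fun a => ψ a)]
    have hfib : ∀ a : R ⧸ P,
        (∑ _x ∈ Finset.univ.filter fun x : R ⧸ P => x ^ 2 = a, ψ a)
          = ((quadraticChar (R ⧸ P) a : ℂ) + 1) * ψ a := by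
      intro a
      rw [Finset.sum_const, nsmul_eq_mul]
      congr 1
      have hc := quadraticChar_card_sqrts hchar2 a
      rw [Set.toFinset_setOf] at hc
      have hc' : (((Finset.univ.filter fun x : R ⧸ P => x ^ 2 = a).card : ℤ))
          = quadraticChar (R ⧸ P) a + 1 := hc
      exact_mod_cast congrArg (Int.cast : ℤ → ℂ) hc'
    rw [Finset.sum_congr rfl fun a _ => hfib a]
    have : ∀ a : R ⧸ P, ((quadraticChar (R ⧸ P) a : ℂ) + 1) * ψ a = χ a * ψ a + ψ a := by
      intro a
      rw [hχdef]
      simp [MulChar.ringHomComp_apply]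
      ring
    rw [Finset.sum_congr rfl fun a _ => this a, Finset.sum_add_distrib]
    rw [AddChar.sum_eq_zero_iff_ne_zero.mpr hψne, add_zero]
    rfl
  rw [hsum]
  rw [gaussSum_sq ((MulChar.ringHomComp_ne_one_iff (RingHom.injective_int _)).mpr
      (quadraticChar_ne_one hchar2)) ((quadraticChar_isQuadratic (R ⧸ P)).comp _)
      (AddChar.IsPrimitive.of_ne_one hψne)]
  congr 1
  -- identify `χ(-1)` with the quadratic-residue symbol
  have hm1 : Ideal.Quotient.mk P (-1 : R) = (-1 : R ⧸ P) := by
    rw [map_neg, map_one]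
  rw [hm1]
  by_cases hsq : IsSquare (-1 : R ⧸ P)
  · rw [if_pos hsq]
    rw [MulChar.ringHomComp_apply,
      (quadraticChar_one_iff_isSquare (neg_ne_zero.mpr one_ne_zero)).mpr hsq]
    simp
  · rw [if_neg hsq]
    rw [MulChar.ringHomComp_apply, quadraticChar_neg_one_iff_not_isSquare.mpr hsq]
    simp
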